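/- The McN hazard rate function h(x) satisfies h(x) ~ (b/σ²) x as x → +∞, i.e., lim_{x→∞} h(x)/x = b/σ². -/

import Mathlib

open Real MeasureTheory Filter Topology

noncomputable def betaFn (a b : ℝ) : ℝ := ∫ t in (0:ℝ)..1, t ^ (a-1) * (1-t) ^ (b-1)

noncomputable def gaussPdf (x : ℝ) : ℝ := (Real.sqrt (2 * Real.pi))⁻¹ * Real.exp (-x^2/2)

noncomputable def stdNormCdf (x : ℝ) : ℝ := ∫ t in Set.Iic x, gaussPdf t

noncomputable def mcNPdf (a b c μ σ x : ℝ) : ℝ :=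
  (c / (betaFn a b * σ)) * gaussPdf ((x - μ)/σ)
    * stdNormCdf ((x - μ)/σ) ^ (a*c - 1)
    * (1 - stdNormCdf ((x - μ)/σ) ^ c) ^ (b - 1)

noncomputable def mcNCdf (a b c μ σ x : ℝ) : ℝ :=
  (1 / betaFn a b) * ∫ t in (0:ℝ)..(stdNormCdf ((x - μ)/σ) ^ c), t ^ (a-1) * (1-t) ^ (b-1)

noncomputable def mcNHazard (a b c μ σ x : ℝ) : ℝ :=
  mcNPdf a b c μ σ x / (1 - mcNCdf a b c μ σ x)

open Set

section Aux

lemma gaussPdf_pos (x : ℝ) : 0 < gaussPdf x := by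
  unfold gaussPdf; positivity

lemma gaussPdf_cont : Continuous gaussPdf := by
  unfold gaussPdf; continuity

lemma integrable_gaussPdf : Integrable gaussPdf := by
  unfold gaussPdf
  have : Integrable (fun x : ℝ => Real.exp (-(2⁻¹) * x^2)) := integrable_exp_neg_mul_sq (by norm_num)
  exact (this.const_mul ((Real.sqrt (2 * Real.pi))⁻¹)).congr (by filter_upwards with x; ring_nf)

lemma integral_gaussPdf : ∫ x, gaussPdf x = 1 := by
  unfold gaussPdf
  rw [MeasureTheory.integral_const_mul]
  have h : ∫ x : ℝ, Real.exp (-x^2/2) = ∫ x : ℝ, Real.exp (-(2⁻¹) * x^2) := by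
    congr 1; ext x; ring_nf
  rw [h, integral_gaussian]
  have : Real.pi / 2⁻¹ = 2 * Real.pi := by ring
  rw [this, inv_mul_cancel₀ (by positivity)]

lemma tendsto_stdNormCdf : Tendsto stdNormCdf atTop (𝓝 1) := by
  have h := tendsto_setIntegral_of_monotone (μ := volume) (f := gaussPdf)
    (s := fun x : ℝ => Iic x) (fun i => measurableSet_Iic)
    (fun i j hij => Iic_subset_Iic.2 hij) ?_
  · have hu : (⋃ x : ℝ, Iic x) = univ := iUnion_Iic
    rw [hu] at h
    exact (by simpa [setIntegral_univ, integral_gaussPdf] using h : Tendsto (fun i : ℝ => ∫ x in Iic i, gaussPdf x) atTop (𝓝 1))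
  · rw [iUnion_Iic]
    exact integrable_gaussPdf.integrableOn

lemma hasDerivAt_stdNormCdf (x : ℝ) : HasDerivAt stdNormCdf (gaussPdf x) x := by
  have key : ∀ y : ℝ, stdNormCdf y = stdNormCdf 0 + ∫ t in (0:ℝ)..y, gaussPdf t := by
    intro y
    have := intervalIntegral.integral_Iic_sub_Iic (μ := volume) (f := gaussPdf)
      integrable_gaussPdf.integrableOn integrable_gaussPdf.integrableOn (a := 0) (b := y)
    simp only [stdNormCdf]
    linarith [this]
  have hd : HasDerivAt (fun u => ∫ t in (0:ℝ)..u, gaussPdf t) (gaussPdf x) x :=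
    intervalIntegral.integral_hasDerivAt_right
      (integrable_gaussPdf.intervalIntegrable)
      (gaussPdf_cont.stronglyMeasurableAtFilter _ _)
      gaussPdf_cont.continuousAt
  have := hd.const_add (stdNormCdf 0)
  exact this.congr_of_eventuallyEq (by filter_upwards with y; rw [key y])

lemma hasDerivAt_gaussPdf (x : ℝ) : HasDerivAt gaussPdf (-x * gaussPdf x) x := by
  unfold gaussPdf
  have h1 : HasDerivAt (fun x : ℝ => -x^2/2) (-x) x := by
    have := ((hasDerivAt_pow 2 x).neg).div_const 2
    simpa using this.congr_deriv (by ring)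
  have h2 := (h1.exp).const_mul ((Real.sqrt (2 * Real.pi))⁻¹)
  exact h2.congr_deriv (by ring)

lemma tendsto_gaussPdf_zero : Tendsto gaussPdf atTop (𝓝 0) := by
  unfold gaussPdf
  rw [show (0:ℝ) = (Real.sqrt (2 * Real.pi))⁻¹ * 0 by ring]
  apply Tendsto.const_mul
  apply Real.tendsto_exp_atBot.comp
  have h1 : Tendsto (fun x : ℝ => x^2/2) atTop atTop :=
    (tendsto_pow_atTop (by norm_num)).atTop_div_const (by norm_num)
  have := tendsto_neg_atTop_atBot.comp h1
  exact this.congr (fun x => by simp [neg_div])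

lemma tendsto_W_zero : Tendsto (fun z => 1 - stdNormCdf z) atTop (𝓝 0) := by
  have := tendsto_stdNormCdf.const_sub 1
  simpa using this

lemma mills_le {z : ℝ} (hz : 0 < z) : 1 - stdNormCdf z ≤ gaussPdf z / z := by
  set g : ℝ → ℝ := fun z => gaussPdf z / z - (1 - stdNormCdf z) with hg
  have hd : ∀ y : ℝ, 0 < y → HasDerivAt g (-(gaussPdf y)/y^2) y := by
    intro y hy
    have h1 : HasDerivAt (fun z => gaussPdf z / z) ((-y * gaussPdf y * y - gaussPdf y * 1)/y^2) y :=
      (hasDerivAt_gaussPdf y).div (hasDerivAt_id y) hy.ne'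
    have h2 : HasDerivAt (fun z => 1 - stdNormCdf z) (-(gaussPdf y)) y := by
      simpa using (hasDerivAt_stdNormCdf y).const_sub 1
    have := h1.sub h2
    apply this.congr_deriv
    field_simp
    ring
  have hanti : AntitoneOn g (Ici z) := by
    apply antitoneOn_of_deriv_nonpos (convex_Ici z)
    · exact fun y hy => (hd y (hz.trans_le hy)).continuousAt.continuousWithinAt
    · intro y hy
      rw [interior_Ici] at hy
      exact ((hd y (hz.trans hy)).differentiableAt).differentiableWithinAt
    · intro y hy
      rw [interior_Ici] at hy
      rw [(hd y (hz.trans hy)).deriv]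
      have hyp : 0 < y := hz.trans hy
      have hφ := gaussPdf_pos y
      exact div_nonpos_of_nonpos_of_nonneg (by linarith) (by positivity)
  have hlim : Tendsto g atTop (𝓝 0) := by
    have h1 : Tendsto (fun z => gaussPdf z / z) atTop (𝓝 0) := by
      have := tendsto_gaussPdf_zero.mul tendsto_inv_atTop_zero
      simpa [div_eq_mul_inv] using this
    simpa using h1.sub tendsto_W_zero
  have h0 : 0 ≤ g z := by
    apply le_of_tendsto hlim
    filter_upwards [eventually_ge_atTop z] with y hy
    exact hanti self_mem_Ici hy hy
  simpa [hg, sub_nonneg] using h0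

lemma mills_ge (z : ℝ) : z * gaussPdf z / (1 + z^2) ≤ 1 - stdNormCdf z := by
  set g : ℝ → ℝ := fun z => (1 - stdNormCdf z) - z * gaussPdf z / (1 + z^2) with hg
  have hd : ∀ y : ℝ, HasDerivAt g (-2 * gaussPdf y/(1+y^2)^2) y := by
    intro y
    have hne : (1 + y^2) ≠ 0 := by positivity
    have h1 : HasDerivAt (fun z => z * gaussPdf z) (1 * gaussPdf y + y * (-y * gaussPdf y)) y :=
      (hasDerivAt_id y).mul (hasDerivAt_gaussPdf y)
    have h2 : HasDerivAt (fun z : ℝ => 1 + z^2) (2*y) y := by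
      simpa using ((hasDerivAt_pow 2 y).const_add 1)
    have h3 := h1.div h2 hne
    have h4 : HasDerivAt (fun z => 1 - stdNormCdf z) (-(gaussPdf y)) y := by
      simpa using (hasDerivAt_stdNormCdf y).const_sub 1
    apply (h4.sub h3).congr_deriv
    field_simp
    ring
  have hanti : Antitone g := by
    apply antitone_of_deriv_nonpos
    · exact fun y => (hd y).differentiableAt
    · intro y
      rw [(hd y).deriv]
      apply div_nonpos_of_nonpos_of_nonneg <;> nlinarith [gaussPdf_pos y]
  have hlim : Tendsto g atTop (𝓝 0) := by
    have h1 : Tendsto (fun z => z * gaussPdf z / (1 + z^2)) atTop (𝓝 0) := by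
      refine squeeze_zero_norm' ?_ tendsto_gaussPdf_zero
      filter_upwards [eventually_ge_atTop (1:ℝ)] with y hy
      have h2 := gaussPdf_pos y
      rw [Real.norm_eq_abs, abs_of_nonneg (by positivity)]
      rw [div_le_iff₀ (by positivity)]
      nlinarith [mul_nonneg h2.le (sq_nonneg (y-1)), mul_nonneg h2.le (by linarith : (0:ℝ) ≤ y)]
    simpa using tendsto_W_zero.sub h1
  have h0 : 0 ≤ g z := hanti.le_of_tendsto hlim z
  simpa [hg, sub_nonneg] using h0

lemma tendsto_mills : Tendsto (fun z => z * (1 - stdNormCdf z) / gaussPdf z) atTop (𝓝 1) := by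
  apply tendsto_of_tendsto_of_tendsto_of_le_of_le' (g := fun z => z^2/(1+z^2)) (h := fun _ : ℝ => (1:ℝ))
  · have h1 : Tendsto (fun z : ℝ => (1+z^2)⁻¹) atTop (𝓝 0) := by
      apply Tendsto.inv_tendsto_atTop
      have : Tendsto (fun x : ℝ => x ^ 2) atTop atTop := tendsto_pow_atTop (by norm_num)
      exact tendsto_atTop_add_const_left _ 1 this
    have := h1.const_sub 1
    rw [sub_zero] at this
    apply this.congr
    intro z
    have hne : (1 + z^2) ≠ 0 := by positivity
    field_simp
    ring
  · exact tendsto_const_nhds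
  · filter_upwards [eventually_gt_atTop (0:ℝ)] with z hz
    have h2 := mills_ge z
    have hφ := gaussPdf_pos z
    rw [div_le_div_iff₀ (by positivity) hφ]
    rw [div_le_iff₀ (by positivity)] at h2
    nlinarith
  · filter_upwards [eventually_gt_atTop (0:ℝ)] with z hz
    have h1 := mills_le hz
    have hφ := gaussPdf_pos z
    rw [div_le_one hφ]
    rw [le_div_iff₀ hz] at h1
    nlinarith

lemma betaMeas (a b : ℝ) : Measurable (fun t : ℝ => t ^ (a-1) * (1-t) ^ (b-1)) := by
  fun_prop

lemma betaIntegrableAux {a b : ℝ} (ha : 0 < a) (hb : 0 < b) :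
    IntervalIntegrable (fun t : ℝ => t ^ (a-1) * (1-t) ^ (b-1)) volume 0 1 := by
  have hmeas := betaMeas a b
  rw [intervalIntegrable_iff_integrableOn_Ioc_of_le (by norm_num)]
  have hsplit : Ioc (0:ℝ) 1 = Ioc 0 (1/2) ∪ Ioc (1/2) 1 := by
    rw [Ioc_union_Ioc_eq_Ioc] <;> norm_num
  rw [hsplit]
  apply IntegrableOn.union
  · set C : ℝ := max ((2:ℝ) ^ (1-b)) 1 with hC
    have hint : IntegrableOn (fun t : ℝ => C * t ^ (a-1)) (Ioc 0 (1/2)) volume := by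
      have := (intervalIntegral.intervalIntegrable_rpow' (a := 0) (b := 1/2) (by linarith : (-1:ℝ) < a-1)).1
      exact this.const_mul C
    apply hint.integrable.mono' hmeas.aestronglyMeasurable
    rw [ae_restrict_iff' measurableSet_Ioc]
    filter_upwards with t ht
    rcases ht with ⟨ht0, ht1⟩
    have h1t : (1:ℝ)/2 ≤ 1 - t := by linarith
    have h1t' : 1 - t ≤ 1 := by linarith
    have hb1 : (1 - t) ^ (b-1) ≤ C := by
      rcases le_or_gt 1 b with h | h
      · exact le_max_of_le_right (Real.rpow_le_one (by linarith) h1t' (by linarith))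
      · refine le_max_of_le_left ?_
        have := Real.rpow_le_rpow_of_nonpos (by norm_num : (0:ℝ) < 1/2) h1t (by linarith : b - 1 ≤ 0)
        calc (1-t) ^ (b-1) ≤ ((1:ℝ)/2) ^ (b-1) := this
          _ = (2:ℝ) ^ (1-b) := by
              rw [show (1:ℝ)/2 = 2⁻¹ by norm_num, Real.inv_rpow (by norm_num),
                ← Real.rpow_neg (by norm_num)]
              norm_num
    have hpos : 0 ≤ t ^ (a-1) := Real.rpow_nonneg ht0.le _
    rw [Real.norm_eq_abs, abs_of_nonneg (mul_nonneg hpos (Real.rpow_nonneg (by linarith) _))]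
    calc t ^ (a-1) * (1-t) ^ (b-1) ≤ t ^ (a-1) * C := by
          exact mul_le_mul_of_nonneg_left hb1 hpos
      _ = C * t ^ (a-1) := mul_comm _ _
  · set C : ℝ := max ((2:ℝ) ^ (1-a)) 1 with hC
    have hint : IntegrableOn (fun t : ℝ => C * (1-t) ^ (b-1)) (Ioc (1/2) 1) volume := by
      have h0 := (intervalIntegral.intervalIntegrable_rpow' (a := 0) (b := 1/2) (by linarith : (-1:ℝ) < b-1))
      have h1 := (h0.comp_sub_left 1)
      have : IntervalIntegrable (fun t : ℝ => (1-t) ^ (b-1)) volume (1/2) 1 := by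
        have e : (1:ℝ) - 2⁻¹ = 2⁻¹ := by norm_num
        simpa [e] using h1.symm
      have := (this.const_mul C)
      rw [intervalIntegrable_iff_integrableOn_Ioc_of_le (by norm_num)] at this
      exact this
    apply hint.integrable.mono' hmeas.aestronglyMeasurable
    rw [ae_restrict_iff' measurableSet_Ioc]
    filter_upwards with t ht
    rcases ht with ⟨ht0, ht1⟩
    have h1t : 0 ≤ 1 - t := by linarith
    have ha1 : t ^ (a-1) ≤ C := by
      rcases le_or_gt 1 a with h | h
      · exact le_max_of_le_right (Real.rpow_le_one (by linarith) ht1 (by linarith))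
      · refine le_max_of_le_left ?_
        have := Real.rpow_le_rpow_of_nonpos (by norm_num : (0:ℝ) < 1/2) ht0.le (by linarith : a - 1 ≤ 0)
        calc t ^ (a-1) ≤ ((1:ℝ)/2) ^ (a-1) := this
          _ = (2:ℝ) ^ (1-a) := by
              rw [show (1:ℝ)/2 = 2⁻¹ by norm_num, Real.inv_rpow (by norm_num),
                ← Real.rpow_neg (by norm_num)]
              norm_num
    have hpos : 0 ≤ (1-t) ^ (b-1) := Real.rpow_nonneg h1t _
    rw [Real.norm_eq_abs, abs_of_nonneg (mul_nonneg (Real.rpow_nonneg (by linarith) _) hpos)]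
    exact mul_le_mul_of_nonneg_right ha1 hpos

variable {a b : ℝ}

lemma betaIntegrableSub (ha : 0 < a) (hb : 0 < b) {v w : ℝ} (hv : 0 ≤ v) (hv1 : v ≤ 1)
    (hw0 : 0 ≤ w) (hw : w ≤ 1) :
    IntervalIntegrable (fun t : ℝ => t ^ (a-1) * (1-t) ^ (b-1)) volume v w := by
  apply (betaIntegrableAux ha hb).mono_set
  rw [uIcc_of_le (by norm_num : (0:ℝ) ≤ 1)]
  exact uIcc_subset_Icc ⟨hv, hv1⟩ ⟨hw0, hw⟩

lemma betaFn_pos (ha : 0 < a) (hb : 0 < b) : 0 < betaFn a b := by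
  apply intervalIntegral.intervalIntegral_pos_of_pos_on (betaIntegrableAux ha hb)
  · intro t ht
    have h1 : (0:ℝ) < t := ht.1
    have h2 : (0:ℝ) < 1 - t := by linarith [ht.2]
    positivity
  · norm_num

lemma oneSubRpowInt (hb : 0 < b) {v : ℝ} (hv : v ≤ 1) :
    ∫ t in v..1, (1-t) ^ (b-1) = (1-v) ^ b / b := by
  rw [intervalIntegral.integral_comp_sub_left (fun u : ℝ => u ^ (b-1)) 1]
  rw [sub_self]
  rw [integral_rpow (Or.inl (by linarith))]
  rw [Real.zero_rpow (by linarith : b - 1 + 1 ≠ 0)]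
  rw [sub_add_cancel]
  ring

lemma oneSubInt (hb : 0 < b) {v : ℝ} (hv : v ≤ 1) :
    IntervalIntegrable (fun t : ℝ => (1-t) ^ (b-1)) volume v 1 := by
  have h0 := intervalIntegral.intervalIntegrable_rpow' (a := 0) (b := 1-v) (by linarith : (-1:ℝ) < b-1)
  have h1 := h0.comp_sub_left 1
  simpa using h1.symm

lemma beta_tail_tendsto (ha : 0 < a) (hb : 0 < b) :
    Tendsto (fun v : ℝ => (∫ t in v..1, t ^ (a-1) * (1-t) ^ (b-1)) * b / (1-v) ^ b)
      (𝓝[<] (1:ℝ)) (𝓝 1) := by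
  have hmem : Ioo (1/2 : ℝ) 1 ∈ 𝓝[<] (1:ℝ) := Ioo_mem_nhdsLT_of_mem (by norm_num)
  have hrp : Tendsto (fun v : ℝ => v ^ (a-1)) (𝓝[<] (1:ℝ)) (𝓝 1) := by
    have := (Real.continuousAt_rpow_const 1 (a-1) (Or.inl one_ne_zero)).tendsto.mono_left
      (nhdsWithin_le_nhds (s := Iio (1:ℝ)))
    simpa using this
  apply tendsto_of_tendsto_of_tendsto_of_le_of_le'
    (g := fun v : ℝ => min (v ^ (a-1)) 1) (h := fun v : ℝ => max (v ^ (a-1)) 1)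
  · simpa using hrp.min (tendsto_const_nhds (x := (1:ℝ)))
  · simpa using hrp.max (tendsto_const_nhds (x := (1:ℝ)))
  all_goals {
    filter_upwards [hmem] with v hv
    obtain ⟨hv0, hv1⟩ := hv
    have hv0' : (0:ℝ) < v := by linarith
    have hP : (0:ℝ) < (1-v) ^ b := Real.rpow_pos_of_pos (by linarith) b
    have hbnd : ∀ t ∈ Icc v 1, min (v ^ (a-1)) 1 ≤ t ^ (a-1) ∧ t ^ (a-1) ≤ max (v ^ (a-1)) 1 := by
      intro t ⟨htv, ht1⟩
      have ht0 : 0 < t := lt_of_lt_of_le hv0' htv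
      constructor
      · rcases le_or_gt 1 a with h | h
        · exact le_trans (min_le_left _ _) (Real.rpow_le_rpow hv0'.le htv (by linarith))
        · refine le_trans (min_le_right _ _) ?_
          have := Real.rpow_le_rpow_of_nonpos ht0 ht1 (by linarith : a - 1 ≤ 0)
          simpa using this
      · rcases le_or_gt 1 a with h | h
        · refine le_trans ?_ (le_max_right _ _)
          have := Real.rpow_le_rpow ht0.le ht1 (by linarith : (0:ℝ) ≤ a - 1)
          simpa using this
        · exact le_trans (Real.rpow_le_rpow_of_nonpos hv0' htv (by linarith)) (le_max_left _ _)
    have hIf := betaIntegrableSub ha hb hv0'.le hv1.le zero_le_one le_rfl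
    have hIg := (oneSubInt hb hv1.le)
    have hlow : min (v ^ (a-1)) 1 * ((1-v) ^ b / b) ≤ ∫ t in v..1, t ^ (a-1) * (1-t) ^ (b-1) := by
      have := intervalIntegral.integral_mono_on hv1.le ((hIg.const_mul (min (v ^ (a-1)) 1))) hIf
        (fun t ht => by
          have h1t : (0:ℝ) ≤ (1-t) ^ (b-1) := Real.rpow_nonneg (by linarith [ht.2]) _
          exact mul_le_mul_of_nonneg_right (hbnd t ht).1 h1t)
      rwa [intervalIntegral.integral_const_mul, oneSubRpowInt hb hv1.le] at this
    have hhigh : (∫ t in v..1, t ^ (a-1) * (1-t) ^ (b-1)) ≤ max (v ^ (a-1)) 1 * ((1-v) ^ b / b) := by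
      have := intervalIntegral.integral_mono_on hv1.le hIf ((hIg.const_mul (max (v ^ (a-1)) 1)))
        (fun t ht => by
          have h1t : (0:ℝ) ≤ (1-t) ^ (b-1) := Real.rpow_nonneg (by linarith [ht.2]) _
          exact mul_le_mul_of_nonneg_right (hbnd t ht).2 h1t)
      rwa [intervalIntegral.integral_const_mul, oneSubRpowInt hb hv1.le] at this
    first
      | (rw [le_div_iff₀ hP]
         calc min (v ^ (a-1)) 1 * (1-v) ^ b
             = (min (v ^ (a-1)) 1 * ((1-v) ^ b / b)) * b := by field_simp
           _ ≤ (∫ t in v..1, t ^ (a-1) * (1-t) ^ (b-1)) * b :=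
               mul_le_mul_of_nonneg_right hlow hb.le)
      | (rw [div_le_iff₀ hP]
         calc (∫ t in v..1, t ^ (a-1) * (1-t) ^ (b-1)) * b
             ≤ (max (v ^ (a-1)) 1 * ((1-v) ^ b / b)) * b :=
               mul_le_mul_of_nonneg_right hhigh hb.le
           _ = max (v ^ (a-1)) 1 * (1-v) ^ b := by field_simp) }

lemma slope_tendsto (c : ℝ) :
    Tendsto (fun t : ℝ => (1 - t ^ c)/(1 - t)) (𝓝[<] (1:ℝ)) (𝓝 c) := by
  have hD : HasDerivAt (fun x : ℝ => x ^ c) (c * (1:ℝ) ^ (c-1)) 1 :=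
    Real.hasDerivAt_rpow_const (Or.inl one_ne_zero)
  rw [hasDerivAt_iff_tendsto_slope] at hD
  have h2 : Tendsto (slope (fun x : ℝ => x ^ c) 1) (𝓝[<] (1:ℝ)) (𝓝 (c * (1:ℝ) ^ (c-1))) :=
    hD.mono_left (nhdsWithin_mono 1 (fun t ht => ne_of_lt ht))
  have h3 : (fun t : ℝ => (1 - t ^ c)/(1 - t)) = slope (fun x : ℝ => x ^ c) 1 := by
    funext t
    rw [slope_def_field]
    simp only [Real.one_rpow]
    rw [show (1 - t ^ c) = -(t ^ c - 1) by ring, show (1 - t) = -(t - 1) by ring, neg_div_neg_eq]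
  rw [h3]
  simpa using h2

end Aux

/-- h(x) ~ (b/σ²)x as x → ∞. -/
theorem mcN_hazard_asymptotic_top (a b c μ σ : ℝ)
    (ha : 0 < a) (hb : 0 < b) (hc : 0 < c) (hσ : 0 < σ) :
    Tendsto (fun x => mcNHazard a b c μ σ x / x) atTop (𝓝 (b / σ^2)) := by
  have hz : Tendsto (fun x : ℝ => (x - μ)/σ) atTop atTop := by
    have := (tendsto_atTop_add_const_right atTop (-μ) tendsto_id).atTop_div_const hσ
    exact this.congr (fun x => by simp [sub_eq_add_neg])
  have hu : Tendsto (fun x : ℝ => stdNormCdf ((x - μ)/σ)) atTop (𝓝 1) :=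
    tendsto_stdNormCdf.comp hz
  have E1 : ∀ᶠ x : ℝ in atTop, 0 < x := eventually_gt_atTop 0
  have E2 : ∀ᶠ x : ℝ in atTop, 0 < (x - μ)/σ := hz.eventually_gt_atTop 0
  have E3 : ∀ᶠ x : ℝ in atTop, 1/2 < stdNormCdf ((x - μ)/σ) :=
    hu.eventually (eventually_gt_nhds (by norm_num))
  have E4 : ∀ᶠ x : ℝ in atTop, stdNormCdf ((x - μ)/σ) < 1 := by
    filter_upwards [E2] with x hx
    have h1 := mills_ge ((x - μ)/σ)
    have h2 := gaussPdf_pos ((x - μ)/σ)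
    have h3 : 0 < (x - μ)/σ * gaussPdf ((x - μ)/σ) / (1 + ((x - μ)/σ)^2) := by positivity
    linarith
  have hv : Tendsto (fun x : ℝ => stdNormCdf ((x - μ)/σ) ^ c) atTop (𝓝 1) := by
    have := (Real.continuousAt_rpow_const 1 c (Or.inl one_ne_zero)).tendsto.comp hu
    simpa [Function.comp_def] using this
  have E5 : ∀ᶠ x : ℝ in atTop, 1/2 < stdNormCdf ((x - μ)/σ) ^ c :=
    hv.eventually (eventually_gt_nhds (by norm_num))
  have E6 : ∀ᶠ x : ℝ in atTop, stdNormCdf ((x - μ)/σ) ^ c < 1 := by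
    filter_upwards [E3, E4] with x h3 h4
    exact Real.rpow_lt_one (by linarith) h4 hc
  have hu' : Tendsto (fun x : ℝ => stdNormCdf ((x - μ)/σ)) atTop (𝓝[<] (1:ℝ)) :=
    tendsto_nhdsWithin_of_tendsto_nhds_of_eventually_within _ hu E4
  have hv' : Tendsto (fun x : ℝ => stdNormCdf ((x - μ)/σ) ^ c) atTop (𝓝[<] (1:ℝ)) :=
    tendsto_nhdsWithin_of_tendsto_nhds_of_eventually_within _ hv E6
  -- component limits
  have L1 : Tendsto (fun x : ℝ => (x - μ)/σ * (1 - stdNormCdf ((x - μ)/σ)) / gaussPdf ((x - μ)/σ))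
      atTop (𝓝 1) := tendsto_mills.comp hz
  have L2 : Tendsto (fun x : ℝ => (1 - stdNormCdf ((x - μ)/σ) ^ c) / (1 - stdNormCdf ((x - μ)/σ)))
      atTop (𝓝 c) := (slope_tendsto c).comp hu'
  have L3 : Tendsto (fun x : ℝ =>
      (∫ t in (stdNormCdf ((x - μ)/σ) ^ c)..1, t ^ (a-1) * (1-t) ^ (b-1)) * b
        / (1 - stdNormCdf ((x - μ)/σ) ^ c) ^ b) atTop (𝓝 1) :=
    (beta_tail_tendsto ha hb).comp hv'
  have L4 : Tendsto (fun x : ℝ => stdNormCdf ((x - μ)/σ) ^ (a*c - 1)) atTop (𝓝 1) := by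
    have := (Real.continuousAt_rpow_const 1 (a*c-1) (Or.inl one_ne_zero)).tendsto.comp hu
    simpa [Function.comp_def] using this
  have L5 : Tendsto (fun x : ℝ => ((x - μ)/σ) / x) atTop (𝓝 (1/σ)) := by
    have h1 : Tendsto (fun x : ℝ => 1 - μ * x⁻¹) atTop (𝓝 1) := by
      have := (tendsto_inv_atTop_zero.const_mul μ).const_sub 1
      simpa using this
    have h2 : Tendsto (fun x : ℝ => (1 - μ * x⁻¹)/σ) atTop (𝓝 (1/σ)) := h1.div_const σ
    apply h2.congr'
    filter_upwards [E1] with x hx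
    have hxne : x ≠ 0 := hx.ne'
    field_simp
  have L : Tendsto (fun x : ℝ =>
      (b*c/σ) * stdNormCdf ((x - μ)/σ) ^ (a*c - 1)
        * ((x - μ)/σ * (1 - stdNormCdf ((x - μ)/σ)) / gaussPdf ((x - μ)/σ))⁻¹
        * (((x - μ)/σ) / x)
        * ((1 - stdNormCdf ((x - μ)/σ) ^ c) / (1 - stdNormCdf ((x - μ)/σ)))⁻¹
        * ((∫ t in (stdNormCdf ((x - μ)/σ) ^ c)..1, t ^ (a-1) * (1-t) ^ (b-1)) * b
            / (1 - stdNormCdf ((x - μ)/σ) ^ c) ^ b)⁻¹) atTop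
      (𝓝 (b*c/σ * 1 * 1⁻¹ * (1/σ) * c⁻¹ * 1⁻¹)) := by
    exact ((((L4.const_mul (b*c/σ)).mul (L1.inv₀ one_ne_zero)).mul L5).mul
      (L2.inv₀ hc.ne')).mul (L3.inv₀ one_ne_zero)
  have hval : b*c/σ * 1 * 1⁻¹ * (1/σ) * c⁻¹ * 1⁻¹ = b / σ^2 := by
    field_simp
  rw [hval] at L
  apply L.congr'
  filter_upwards [E1, E2, E3, E4, E5, E6] with x hx1 hx2 hx3 hx4 hx5 hx6
  simp only [mcNHazard, mcNPdf, mcNCdf]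
  set z := (x - μ)/σ with hz_def
  set u := stdNormCdf z with hu_def
  set φv := gaussPdf z with hφ_def
  set v := u ^ c with hv_def
  set B := betaFn a b with hB_def
  set G := ∫ t in v..1, t ^ (a-1) * (1-t) ^ (b-1) with hG_def
  set I0 := ∫ t in (0:ℝ)..v, t ^ (a-1) * (1-t) ^ (b-1) with hI0_def
  have hv0 : (0:ℝ) < v := by linarith
  have hv1 : v < 1 := hx6
  have hu0 : (0:ℝ) < u := by linarith
  have hu1 : u < 1 := hx4
  have hφpos : 0 < φv := gaussPdf_pos z
  have hBpos : 0 < B := betaFn_pos ha hb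
  have hGpos : 0 < G := by
    apply intervalIntegral.intervalIntegral_pos_of_pos_on
      (betaIntegrableSub ha hb hv0.le hv1.le zero_le_one le_rfl)
    · intro t ht
      have h1 : (0:ℝ) < t := lt_trans hv0 ht.1
      have h2 : (0:ℝ) < 1 - t := by linarith [ht.2]
      positivity
    · exact hv1
  have hsplitB : B = I0 + G := by
    rw [hB_def, betaFn, hI0_def, hG_def]
    exact (intervalIntegral.integral_add_adjacent_intervals
      (betaIntegrableSub ha hb le_rfl zero_le_one hv0.le hv1.le)
      (betaIntegrableSub ha hb hv0.le hv1.le zero_le_one le_rfl)).symm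
  have hcdf : (1:ℝ) - 1/B * I0 = G/B := by
    field_simp
    linarith [hsplitB]
  rw [hcdf]
  have h1v : (0:ℝ) < 1 - v := by linarith
  have h1u : (0:ℝ) < 1 - u := by linarith
  have hz0 : (0:ℝ) < z := hx2
  have hrpow : (1 - v) ^ b = (1 - v) ^ (b-1) * (1 - v) := by
    have h := Real.rpow_add h1v (b-1) 1
    rw [Real.rpow_one] at h
    rw [show b - 1 + 1 = b by ring] at h
    exact h
  rw [hrpow]
  have hrp1 : (0:ℝ) < (1-v) ^ (b-1) := Real.rpow_pos_of_pos h1v _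
  field_simp
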